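/- Suppose 𝒮 is a weakly compatible split system on a finite set X whose incompatibility graph ℐ(𝒮) is connected, and 𝒮' ⊆ 𝒮 is an octahedral split subsystem. Then 𝒮 = 𝒮'. -/

import Mathlib

variable {X : Type*}
variable {X : Type*}

namespace Stmt4Aux

def sigb (j : Fin 6) (k : Fin 4) : Bool :=
  match k with
  | 0 => j = 0 || j = 1 || j = 2
  | 1 => j = 1 || j = 2 || j = 3
  | 2 => j = 2 || j = 3 || j = 4
  | 3 => j = 0 || j = 2 || j = 4

abbrev allows (t : Fin 6 → Fin 3) (j : Fin 6) (s : Bool) : Prop :=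
  t j = (cond s 1 0) ∨ t j = 2

abbrev realz (t : Fin 6 → Fin 3) (a b : Fin 4) (p q r : Bool) : Prop :=
  ∃ j : Fin 6, sigb j a = q ∧ sigb j b = r ∧ allows t j p

abbrev bad (t : Fin 6 → Fin 3) (a b : Fin 4) : Prop :=
  ∃ e : Bool, realz t a b e false false ∧ realz t a b (!e) true false ∧
    realz t a b (!e) false true ∧ realz t a b e true true

abbrev incompT (t : Fin 6 → Fin 3) (k : Fin 4) : Prop :=
  (∃ j, sigb j k = true ∧ t j ≠ 0) ∧ (∃ j, sigb j k = false ∧ t j ≠ 0) ∧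
  (∃ j, sigb j k = true ∧ t j ≠ 1) ∧ (∃ j, sigb j k = false ∧ t j ≠ 1)

abbrev octTrace (t : Fin 6 → Fin 3) (k : Fin 4) : Prop :=
  (∀ j, t j = cond (sigb j k) 1 0) ∨ (∀ j, t j = cond (sigb j k) 0 1)

set_option synthInstance.maxSize 4000 in
set_option maxHeartbeats 4000000 in
set_option maxRecDepth 10000 in
theorem core : ∀ t : Fin 6 → Fin 3,
    ¬((∃ k, incompT t k) ∧ (∀ a b, ¬ bad t a b) ∧ ¬ ∃ k : Fin 4, octTrace t k) := by
  decide

end Stmt4Aux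

/-- `S` is a split of `X`: an unordered pair `{A, Aᶜ}` of nonempty complementary parts. -/

def IsSplit (S : Set (Set X)) : Prop :=
  ∃ A : Set X, A.Nonempty ∧ Aᶜ.Nonempty ∧ S = {A, Aᶜ}

/-- Two splits are compatible if some part of one and some part of the other cover `X`. -/
def Compatible (S T : Set (Set X)) : Prop :=
  ∃ A ∈ S, ∃ B ∈ T, A ∪ B = Set.univ

/-- `x` and `y` lie in the same part of the split `S`, i.e. `S(x) = S(y)`. -/
def SameSide (S : Set (Set X)) (x y : X) : Prop :=
  ∀ A ∈ S, (x ∈ A ↔ y ∈ A)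

/-- A split system is weakly compatible if there are no three splits `S₁, S₂, S₃` and
four elements `x₀, x₁, x₂, x₃` with `S_j(x_i) = S_j(x₀)` iff `i = j`. -/
def WeaklyCompatible (𝒮 : Set (Set (Set X))) : Prop :=
  ¬ ∃ (S : Fin 3 → Set (Set X)) (x : Fin 4 → X),
      (∀ j, S j ∈ 𝒮) ∧ ∀ i j : Fin 3, (SameSide (S j) (x i.succ) (x 0) ↔ i = j)

/-- A split system is octahedral if it arises from a partition `X = X₁ ∪̇ ... ∪̇ X₆`
as `S_i = X_i ∪ X_{i+1} ∪ X_{i+2} | X_{i+3} ∪ X_{i+4} ∪ X_{i+5}` (`i = 1, 2, 3`,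
indices mod 6) together with `S₄ = X₁ ∪ X₃ ∪ X₅ | X₂ ∪ X₄ ∪ X₆`. -/
def IsOctahedral (𝒮 : Set (Set (Set X))) : Prop :=
  ∃ Y : ℕ → Set X,
    (∀ i < 6, (Y i).Nonempty) ∧
    (∀ i < 6, ∀ j < 6, i ≠ j → Y i ∩ Y j = ∅) ∧
    (⋃ i ∈ Finset.range 6, Y i) = Set.univ ∧
    𝒮 = {T | (∃ i < 3, T = {Y i ∪ Y (i+1) ∪ Y (i+2),
                            Y ((i+3) % 6) ∪ Y ((i+4) % 6) ∪ Y ((i+5) % 6)}) ∨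
             T = {Y 0 ∪ Y 2 ∪ Y 4, Y 1 ∪ Y 3 ∪ Y 5}}

/-- The incompatibility graph of a split system: vertices are the splits of `𝒮`,
with an edge between each pair of distinct incompatible splits. -/
def IncompGraph (𝒮 : Set (Set (Set X))) : SimpleGraph ↥𝒮 where
  Adj S T := S ≠ T ∧ ¬ Compatible (S : Set (Set X)) T ∧ ¬ Compatible (T : Set (Set X)) S
  symm := by
    refine ⟨fun S T h => ?_⟩
    exact ⟨h.1.symm, h.2.2, h.2.1⟩
  loopless := by
    refine ⟨fun S h => ?_⟩
    exact h.1 rfl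


namespace Stmt4Aux

lemma sameSide_pair {X : Type*} (A : Set X) (x y : X) :
    SameSide {A, Aᶜ} x y ↔ (x ∈ A ↔ y ∈ A) := by
  constructor
  · intro h
    exact h A (Set.mem_insert _ _)
  · intro h C hC
    rcases hC with rfl | hC
    · exact h
    · rw [Set.mem_singleton_iff] at hC
      subst hC
      simp only [Set.mem_compl_iff]
      tauto

variable {X : Type*}

def Apart (blk : X → Fin 6) (k : Fin 4) : Set X := {x | sigb (blk x) k = true}

def Sp (blk : X → Fin 6) (k : Fin 4) : Set (Set X) := {Apart blk k, (Apart blk k)ᶜ}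

lemma mem_Apart (blk : X → Fin 6) (x : X) (k : Fin 4) :
    x ∈ Apart blk k ↔ sigb (blk x) k = true := Iff.rfl

lemma unions (Y : ℕ → Set X) (blk : X → Fin 6)
    (hblk : ∀ (x : X) (j : Fin 6), x ∈ Y (j : ℕ) ↔ blk x = j)
    (k : Fin 4) (a b c : Fin 6)
    (h : ∀ j : Fin 6, sigb j k = true ↔ (j = a ∨ j = b ∨ j = c)) :
    Y (a : ℕ) ∪ Y (b : ℕ) ∪ Y (c : ℕ) = Apart blk k := by
  ext x
  simp only [Set.mem_union, hblk x a, hblk x b, hblk x c, mem_Apart]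
  rw [h (blk x)]
  tauto

lemma unionsC (Y : ℕ → Set X) (blk : X → Fin 6)
    (hblk : ∀ (x : X) (j : Fin 6), x ∈ Y (j : ℕ) ↔ blk x = j)
    (k : Fin 4) (a b c : Fin 6)
    (h : ∀ j : Fin 6, sigb j k = false ↔ (j = a ∨ j = b ∨ j = c)) :
    Y (a : ℕ) ∪ Y (b : ℕ) ∪ Y (c : ℕ) = (Apart blk k)ᶜ := by
  ext x
  simp only [Set.mem_union, hblk x a, hblk x b, hblk x c, Set.mem_compl_iff, mem_Apart,
    Bool.not_eq_true]
  rw [h (blk x)]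
  tauto

lemma walk_boundary {V : Type*} {G : SimpleGraph V} (P : V → Prop) :
    ∀ {a b : V}, G.Walk a b → ¬ P a → P b → ∃ u v, G.Adj u v ∧ ¬ P u ∧ P v := by
  intro a b w
  induction w with
  | nil => intro h1 h2; exact absurd h2 h1
  | @cons u u' b h w ih =>
    intro h1 h2
    by_cases hv : P u'
    · exact ⟨u, u', h, h1, hv⟩
    · exact ih hv h2

theorem key (𝒮 : Set (Set (Set X))) (Y : ℕ → Set X) (blk : X → Fin 6)
    (hblk : ∀ (x : X) (j : Fin 6), x ∈ Y (j : ℕ) ↔ blk x = j)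
    (hYne : ∀ j : Fin 6, (Y (j : ℕ)).Nonempty)
    (hwc : WeaklyCompatible 𝒮)
    (hSmem : ∀ k, Sp blk k ∈ 𝒮)
    (B : Set X) (hB : ({B, Bᶜ} : Set (Set X)) ∈ 𝒮)
    (k : Fin 4) (hic : ¬ Compatible {B, Bᶜ} (Sp blk k)) :
    ∃ k', ({B, Bᶜ} : Set (Set X)) = Sp blk k' := by
  classical
  set t : Fin 6 → Fin 3 :=
    fun j => if Y (j : ℕ) ⊆ B then 1 else if Y (j : ℕ) ∩ B = ∅ then 0 else 2 with ht
  have t1 : ∀ j : Fin 6, t j = 1 → Y (j : ℕ) ⊆ B := by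
    intro j h
    simp only [ht] at h
    split_ifs at h with h1 h2
    · exact h1
    · exact absurd h (by decide)
    · exact absurd h (by decide)
  have t0 : ∀ j : Fin 6, t j = 0 → Y (j : ℕ) ∩ B = ∅ := by
    intro j h
    simp only [ht] at h
    split_ifs at h with h1 h2
    · exact absurd h (by decide)
    · exact h2
    · exact absurd h (by decide)
  have t2 : ∀ j : Fin 6, t j = 2 → ¬ (Y (j : ℕ) ⊆ B) ∧ Y (j : ℕ) ∩ B ≠ ∅ := by
    intro j h
    simp only [ht] at h
    split_ifs at h with h1 h2
    · exact absurd h (by decide)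
    · exact absurd h (by decide)
    · exact ⟨h1, h2⟩
  have tne0 : ∀ (j : Fin 6) (x : X), x ∈ Y (j : ℕ) → x ∈ B → t j ≠ 0 := by
    intro j x hx hxB h0
    have := t0 j h0
    exact absurd (Set.mem_inter hx hxB) (this ▸ Set.notMem_empty x)
  have tne1 : ∀ (j : Fin 6) (x : X), x ∈ Y (j : ℕ) → x ∉ B → t j ≠ 1 := by
    intro j x hx hxB h1
    exact hxB (t1 j h1 hx)
  have hpt : ∀ (j : Fin 6) (s : Bool), allows t j s →
      ∃ x, x ∈ Y (j : ℕ) ∧ (x ∈ B ↔ s = true) := by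
    intro j s hs
    rcases hs with h | h
    · cases s
      · obtain ⟨x, hx⟩ := hYne j
        have h0 := t0 j h
        refine ⟨x, hx, ?_⟩
        simp only [Bool.false_eq_true, iff_false]
        intro hxB
        exact (h0 ▸ Set.notMem_empty x) (Set.mem_inter hx hxB)
      · obtain ⟨x, hx⟩ := hYne j
        exact ⟨x, hx, by simp [t1 j h hx]⟩
    · cases s
      · obtain ⟨x, hx, hxB⟩ := Set.not_subset.mp (t2 j h).1
        exact ⟨x, hx, by simp [hxB]⟩
      · obtain ⟨x, hx⟩ := Set.nonempty_iff_ne_empty.mpr (t2 j h).2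
        exact ⟨x, hx.1, by simp [hx.2]⟩
  -- incompatibility gives incompT
  have hmemB : B ∈ ({B, Bᶜ} : Set (Set X)) := Set.mem_insert _ _
  have hmemBc : Bᶜ ∈ ({B, Bᶜ} : Set (Set X)) := Set.mem_insert_of_mem _ rfl
  have hmemA : Apart blk k ∈ Sp blk k := Set.mem_insert _ _
  have hmemAc : (Apart blk k)ᶜ ∈ Sp blk k := Set.mem_insert_of_mem _ rfl
  have hic' : ∀ A ∈ ({B, Bᶜ} : Set (Set X)), ∀ C ∈ Sp blk k, A ∪ C ≠ Set.univ := by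
    intro A hA C hC hU
    exact hic ⟨A, hA, C, hC, hU⟩
  have hxblk : ∀ x : X, x ∈ Y ((blk x : Fin 6) : ℕ) := fun x => (hblk x (blk x)).mpr rfl
  have hinc : incompT t k := by
    refine ⟨?_, ?_, ?_, ?_⟩
    · obtain ⟨x, hx⟩ := Set.ne_univ_iff_exists_notMem _ |>.mp (hic' Bᶜ hmemBc _ hmemAc)
      simp only [Set.mem_union, Set.mem_compl_iff, not_or, not_not] at hx
      exact ⟨blk x, hx.2, tne0 _ x (hxblk x) hx.1⟩
    · obtain ⟨x, hx⟩ := Set.ne_univ_iff_exists_notMem _ |>.mp (hic' Bᶜ hmemBc _ hmemA)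
      simp only [Set.mem_union, Set.mem_compl_iff, not_or, not_not] at hx
      exact ⟨blk x, Bool.not_eq_true _ ▸ hx.2, tne0 _ x (hxblk x) hx.1⟩
    · obtain ⟨x, hx⟩ := Set.ne_univ_iff_exists_notMem _ |>.mp (hic' B hmemB _ hmemAc)
      simp only [Set.mem_union, Set.mem_compl_iff, not_or, not_not] at hx
      exact ⟨blk x, hx.2, tne1 _ x (hxblk x) hx.1⟩
    · obtain ⟨x, hx⟩ := Set.ne_univ_iff_exists_notMem _ |>.mp (hic' B hmemB _ hmemA)
      simp only [Set.mem_union, Set.mem_compl_iff, not_or, not_not] at hx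
      exact ⟨blk x, Bool.not_eq_true _ ▸ hx.2, tne1 _ x (hxblk x) hx.1⟩
  -- weak compatibility gives no bad pair
  have hbadall : ∀ a b, ¬ bad t a b := by
    rintro a b ⟨e, r1, r2, r3, r4⟩
    obtain ⟨j1, s1a, s1b, al1⟩ := r1
    obtain ⟨j2, s2a, s2b, al2⟩ := r2
    obtain ⟨j3, s3a, s3b, al3⟩ := r3
    obtain ⟨j0, s0a, s0b, al0⟩ := r4
    obtain ⟨x0, hx0Y, hx0B⟩ := hpt j0 e al0
    obtain ⟨x1, hx1Y, hx1B⟩ := hpt j1 e al1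
    obtain ⟨x2, hx2Y, hx2B⟩ := hpt j2 (!e) al2
    obtain ⟨x3, hx3Y, hx3B⟩ := hpt j3 (!e) al3
    have hb0 : blk x0 = j0 := (hblk x0 j0).mp hx0Y
    have hb1 : blk x1 = j1 := (hblk x1 j1).mp hx1Y
    have hb2 : blk x2 = j2 := (hblk x2 j2).mp hx2Y
    have hb3 : blk x3 = j3 := (hblk x3 j3).mp hx3Y
    apply hwc
    refine ⟨![{B, Bᶜ}, Sp blk a, Sp blk b], ![x0, x1, x2, x3], ?_, ?_⟩
    · intro j
      fin_cases j
      · exact hB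
      · exact hSmem a
      · exact hSmem b
    · intro i j
      fin_cases i <;> fin_cases j
      · show SameSide {B, Bᶜ} x1 x0 ↔ _
        rw [sameSide_pair, hx1B, hx0B]
        simp
      · show SameSide {Apart blk a, (Apart blk a)ᶜ} x1 x0 ↔ _
        rw [sameSide_pair]
        simp only [mem_Apart, hb0, hb1, s1a, s0a]
        try simp
      · show SameSide {Apart blk b, (Apart blk b)ᶜ} x1 x0 ↔ _
        rw [sameSide_pair]
        simp only [mem_Apart, hb0, hb1, s1b, s0b]
        try simp
      · show SameSide {B, Bᶜ} x2 x0 ↔ _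
        rw [sameSide_pair, hx2B, hx0B]
        cases e <;> simp
      · show SameSide {Apart blk a, (Apart blk a)ᶜ} x2 x0 ↔ _
        rw [sameSide_pair]
        simp only [mem_Apart, hb0, hb2, s2a, s0a]
        try simp
      · show SameSide {Apart blk b, (Apart blk b)ᶜ} x2 x0 ↔ _
        rw [sameSide_pair]
        simp only [mem_Apart, hb0, hb2, s2b, s0b]
        try simp
      · show SameSide {B, Bᶜ} x3 x0 ↔ _
        rw [sameSide_pair, hx3B, hx0B]
        cases e <;> simp
      · show SameSide {Apart blk a, (Apart blk a)ᶜ} x3 x0 ↔ _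
        rw [sameSide_pair]
        simp only [mem_Apart, hb0, hb3, s3a, s0a]
        try simp
      · show SameSide {Apart blk b, (Apart blk b)ᶜ} x3 x0 ↔ _
        rw [sameSide_pair]
        simp only [mem_Apart, hb0, hb3, s3b, s0b]
        try simp
  -- conclude via the finite core
  have hoctt : ∃ k', octTrace t k' := by
    by_contra h
    exact core t ⟨⟨k, hinc⟩, hbadall, h⟩
  obtain ⟨k', hk'⟩ := hoctt
  refine ⟨k', ?_⟩
  rcases hk' with h | h
  · have hBA : B = Apart blk k' := by
      ext x
      rw [mem_Apart]
      have hx := hxblk x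
      have htx := h (blk x)
      cases hsig : sigb (blk x) k'
      · rw [hsig] at htx
        have h0 := t0 _ htx
        simp only [Bool.false_eq_true, iff_false]
        intro hxB
        exact (h0 ▸ Set.notMem_empty x) (Set.mem_inter hx hxB)
      · rw [hsig] at htx
        simp [t1 _ htx hx]
    show ({B, Bᶜ} : Set (Set X)) = {Apart blk k', (Apart blk k')ᶜ}
    rw [hBA]
  · have hBA : B = (Apart blk k')ᶜ := by
      ext x
      rw [Set.mem_compl_iff, mem_Apart]
      have hx := hxblk x
      have htx := h (blk x)
      cases hsig : sigb (blk x) k'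
      · rw [hsig] at htx
        simp [t1 _ htx hx]
      · rw [hsig] at htx
        have h0 := t0 _ htx
        have hxB : x ∉ B := fun hxB => (h0 ▸ Set.notMem_empty x) (Set.mem_inter hx hxB)
        simp [hxB]
    show ({B, Bᶜ} : Set (Set X)) = {Apart blk k', (Apart blk k')ᶜ}
    rw [hBA, compl_compl, Set.pair_comm]

end Stmt4Aux

/-- a weakly compatible split system with connected incompatibility graph
that contains an octahedral subsystem is equal to that subsystem. -/
theorem stmt4 [Fintype X] (𝒮 𝒮' : Set (Set (Set X)))
    (hsplits : ∀ S ∈ 𝒮, IsSplit S)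
    (hwc : WeaklyCompatible 𝒮)
    (hconn : (IncompGraph 𝒮).Connected)
    (hsub : 𝒮' ⊆ 𝒮) (hoct : IsOctahedral 𝒮') :
    𝒮 = 𝒮' := by
  classical
  obtain ⟨Y, hne, hdisj, hcov, hS'⟩ := hoct
  have hex : ∀ x : X, ∃ j : Fin 6, x ∈ Y (j : ℕ) := by
    intro x
    have hx : x ∈ ⋃ i ∈ Finset.range 6, Y i := hcov ▸ Set.mem_univ x
    simp only [Set.mem_iUnion] at hx
    obtain ⟨i, hi, hxi⟩ := hx
    exact ⟨⟨i, Finset.mem_range.mp hi⟩, hxi⟩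
  choose blk hblk0 using hex
  have hblk : ∀ (x : X) (j : Fin 6), x ∈ Y (j : ℕ) ↔ blk x = j := by
    intro x j
    constructor
    · intro hx
      by_contra hne'
      have hd := hdisj (blk x) (blk x).isLt j j.isLt
        (fun hv => hne' (Fin.val_injective hv))
      exact (hd ▸ Set.notMem_empty x) (Set.mem_inter (hblk0 x) hx)
    · rintro rfl
      exact hblk0 x
  have hYne : ∀ j : Fin 6, (Y (j : ℕ)).Nonempty := fun j => hne j j.isLt
  have e0 : Y 0 ∪ Y 1 ∪ Y 2 = Stmt4Aux.Apart blk 0 :=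
    Stmt4Aux.unions Y blk hblk 0 0 1 2 (by decide)
  have e0c : Y 3 ∪ Y 4 ∪ Y 5 = (Stmt4Aux.Apart blk 0)ᶜ :=
    Stmt4Aux.unionsC Y blk hblk 0 3 4 5 (by decide)
  have e1 : Y 1 ∪ Y 2 ∪ Y 3 = Stmt4Aux.Apart blk 1 :=
    Stmt4Aux.unions Y blk hblk 1 1 2 3 (by decide)
  have e1c : Y 4 ∪ Y 5 ∪ Y 0 = (Stmt4Aux.Apart blk 1)ᶜ :=
    Stmt4Aux.unionsC Y blk hblk 1 4 5 0 (by decide)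
  have e2 : Y 2 ∪ Y 3 ∪ Y 4 = Stmt4Aux.Apart blk 2 :=
    Stmt4Aux.unions Y blk hblk 2 2 3 4 (by decide)
  have e2c : Y 5 ∪ Y 0 ∪ Y 1 = (Stmt4Aux.Apart blk 2)ᶜ :=
    Stmt4Aux.unionsC Y blk hblk 2 5 0 1 (by decide)
  have e3 : Y 0 ∪ Y 2 ∪ Y 4 = Stmt4Aux.Apart blk 3 :=
    Stmt4Aux.unions Y blk hblk 3 0 2 4 (by decide)
  have e3c : Y 1 ∪ Y 3 ∪ Y 5 = (Stmt4Aux.Apart blk 3)ᶜ :=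
    Stmt4Aux.unionsC Y blk hblk 3 1 3 5 (by decide)
  have hset : 𝒮' = {Stmt4Aux.Sp blk 0, Stmt4Aux.Sp blk 1, Stmt4Aux.Sp blk 2,
      Stmt4Aux.Sp blk 3} := by
    rw [hS']
    ext T
    simp only [Set.mem_setOf_eq, Set.mem_insert_iff, Set.mem_singleton_iff]
    constructor
    · rintro (⟨i, hi, rfl⟩ | rfl)
      · interval_cases i
        · refine Or.inl ?_
          show ({Y 0 ∪ Y 1 ∪ Y 2, Y 3 ∪ Y 4 ∪ Y 5} : Set (Set X)) = _
          rw [e0, e0c]; rfl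
        · refine Or.inr (Or.inl ?_)
          show ({Y 1 ∪ Y 2 ∪ Y 3, Y 4 ∪ Y 5 ∪ Y 0} : Set (Set X)) = _
          rw [e1, e1c]; rfl
        · refine Or.inr (Or.inr (Or.inl ?_))
          show ({Y 2 ∪ Y 3 ∪ Y 4, Y 5 ∪ Y 0 ∪ Y 1} : Set (Set X)) = _
          rw [e2, e2c]; rfl
      · refine Or.inr (Or.inr (Or.inr ?_))
        rw [e3, e3c]; rfl
    · rintro (rfl | rfl | rfl | rfl)
      · refine Or.inl ⟨0, by norm_num, ?_⟩
        show _ = ({Y 0 ∪ Y 1 ∪ Y 2, Y 3 ∪ Y 4 ∪ Y 5} : Set (Set X))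
        rw [e0, e0c]; rfl
      · refine Or.inl ⟨1, by norm_num, ?_⟩
        show _ = ({Y 1 ∪ Y 2 ∪ Y 3, Y 4 ∪ Y 5 ∪ Y 0} : Set (Set X))
        rw [e1, e1c]; rfl
      · refine Or.inl ⟨2, by norm_num, ?_⟩
        show _ = ({Y 2 ∪ Y 3 ∪ Y 4, Y 5 ∪ Y 0 ∪ Y 1} : Set (Set X))
        rw [e2, e2c]; rfl
      · refine Or.inr ?_
        rw [e3, e3c]; rfl
  have hSp𝒮 : ∀ k, Stmt4Aux.Sp blk k ∈ 𝒮 := by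
    intro k
    apply hsub
    rw [hset]
    fin_cases k <;> simp
  by_contra hne𝒮
  have hexT : ∃ T ∈ 𝒮, T ∉ 𝒮' := by
    by_contra h
    push_neg at h
    exact hne𝒮 (Set.Subset.antisymm h hsub)
  obtain ⟨T, hT, hT'⟩ := hexT
  have hreach := hconn.preconnected ⟨T, hT⟩ ⟨Stmt4Aux.Sp blk 3, hSp𝒮 3⟩
  refine hreach.elim fun w => ?_
  obtain ⟨u, v, hadj, hu, hv⟩ :=
    Stmt4Aux.walk_boundary (fun z : ↥𝒮 => z.val ∈ 𝒮') w hT' (by rw [hset]; simp)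
  rw [hset] at hv
  simp only [Set.mem_insert_iff, Set.mem_singleton_iff] at hv
  have hvk : ∃ k : Fin 4, v.val = Stmt4Aux.Sp blk k := by
    rcases hv with h | h | h | h
    exacts [⟨0, h⟩, ⟨1, h⟩, ⟨2, h⟩, ⟨3, h⟩]
  obtain ⟨k, hvk⟩ := hvk
  obtain ⟨B, hBne, hBcne, hBeq⟩ := hsplits u.val u.property
  have hic : ¬ Compatible {B, Bᶜ} (Stmt4Aux.Sp blk k) := by
    rw [← hBeq, ← hvk]
    exact hadj.2.1
  obtain ⟨k', hk'⟩ := Stmt4Aux.key 𝒮 Y blk hblk hYne hwc hSp𝒮 B (hBeq ▸ u.property) k hic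
  apply hu
  rw [hset, hBeq, hk']
  fin_cases k' <;> simp
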